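/- arXiv:1806.03871 — 2 statements merged into one kernel-verified Lean document; each statement's English description precedes it below -/
import Mathlib

section
/- For every integer g ≥ 2, the surface group of genus g, presented as ⟨a_1, b_1, …, a_g, b_g | [a_1,b_1][a_2,b_2]⋯[a_g,b_g] = 1⟩, has uncountably many conjugacy classes of maximal subgroups of infinite index. -/
open scoped commutatorElement
/-- The surface relator [a₁,b₁][a₂,b₂]⋯[a_g,b_g], where a_i = of (i, false) and
b_i = of (i, true). -/
def surfaceRel (g : ℕ) : FreeGroup (Fin g × Bool) :=
  ((List.finRange g).map
    (fun i => ⁅FreeGroup.of (i, false), FreeGroup.of (i, true)⁆)).prod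

/-- The surface group of genus g:
⟨a₁, b₁, …, a_g, b_g ∣ [a₁,b₁][a₂,b₂]⋯[a_g,b_g] = 1⟩. -/
abbrev SurfaceGroup (g : ℕ) : Type :=
  PresentedGroup ({surfaceRel g} : Set (FreeGroup (Fin g × Bool)))

/-- Conjugacy of subgroups (restricted to those satisfying a property `P`). -/
def conjRel {G : Type*} [Group G] (P : Subgroup G → Prop)
    (M N : {M : Subgroup G // P M}) : Prop :=
  ∃ g : G, (N : Subgroup G) = Subgroup.map (MulAut.conj g).toMonoidHom (M : Subgroup G)

open Function

/-- The set of "left endpoints" of the swapped pairs of the involution encoding `S`. -/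
def inK (S : Set ℕ) (x : ℤ) : Prop := x = 0 ∨ ∃ n ∈ S, x = -(2 * (n : ℤ)) - 5

lemma inK_zero (S : Set ℕ) : inK S 0 := Or.inl rfl

lemma inK_nonpos {S : Set ℕ} {x : ℤ} (h : inK S x) : x ≤ 0 := by
  rcases h with rfl | ⟨n, _, rfl⟩ <;> omega

lemma not_inK_succ {S : Set ℕ} {x : ℤ} (h : inK S x) : ¬ inK S (x + 1) := by
  rcases h with rfl | ⟨n, _, rfl⟩ <;> rintro (h1 | ⟨m, _, h2⟩) <;> omega

/-- The involution of ℤ encoding `S`: swaps `x` and `x+1` for `x` with `inK S x`. -/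
noncomputable def tf (S : Set ℕ) (x : ℤ) : ℤ :=
  open scoped Classical in
  if inK S x then x + 1 else if inK S (x - 1) then x - 1 else x

lemma tf_of_inK {S : Set ℕ} {x : ℤ} (h : inK S x) : tf S x = x + 1 := by
  unfold tf; rw [if_pos h]

lemma tf_of_inK' {S : Set ℕ} {x : ℤ} (h1 : ¬ inK S x) (h2 : inK S (x - 1)) :
    tf S x = x - 1 := by
  unfold tf; rw [if_neg h1, if_pos h2]

lemma tf_of_not {S : Set ℕ} {x : ℤ} (h1 : ¬ inK S x) (h2 : ¬ inK S (x - 1)) :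
    tf S x = x := by
  unfold tf; rw [if_neg h1, if_neg h2]

lemma tf_invol (S : Set ℕ) : Involutive (tf S) := by
  intro x
  by_cases h1 : inK S x
  · rw [tf_of_inK h1]
    have h2 : ¬ inK S (x + 1) := not_inK_succ h1
    rw [tf_of_inK' h2 (by simpa using h1)]
    ring
  · by_cases h2 : inK S (x - 1)
    · rw [tf_of_inK' h1 h2, tf_of_inK h2]
      ring
    · rw [tf_of_not h1 h2, tf_of_not h1 h2]

lemma tf_zero (S : Set ℕ) : tf S 0 = 1 := by rw [tf_of_inK (inK_zero S)]; ring

lemma not_inK_one (S : Set ℕ) : ¬ inK S 1 := by rintro (h | ⟨n, _, h⟩) <;> omega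

lemma tf_one (S : Set ℕ) : tf S 1 = 0 := by
  rw [tf_of_inK' (not_inK_one S) (by simpa using inK_zero S)]; ring

lemma tf_of_two_le {S : Set ℕ} {x : ℤ} (h : 2 ≤ x) : tf S x = x := by
  have h1 : ¬ inK S x := fun hh => by have := inK_nonpos hh; omega
  have h2 : ¬ inK S (x - 1) := fun hh => by have := inK_nonpos hh; omega
  exact tf_of_not h1 h2

lemma le_one_of_tf_ne {S : Set ℕ} {x : ℤ} (h : tf S x ≠ x) : x ≤ 1 := by
  by_cases h1 : inK S x
  · have := inK_nonpos h1; omega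
  · by_cases h2 : inK S (x - 1)
    · have := inK_nonpos h2; omega
    · exact absurd (tf_of_not h1 h2) h

lemma mem_iff_tf_ne (S : Set ℕ) (n : ℕ) :
    n ∈ S ↔ tf S (-(2 * (n : ℤ)) - 5) ≠ -(2 * (n : ℤ)) - 5 := by
  constructor
  · intro hn
    rw [tf_of_inK (Or.inr ⟨n, hn, rfl⟩)]
    omega
  · intro h
    by_contra hn
    have h1 : ¬ inK S (-(2 * (n : ℤ)) - 5) := by
      rintro (hh | ⟨m, hm, hh⟩)
      · omega
      · have : m = n := by omega
        exact hn (this ▸ hm)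
    have h2 : ¬ inK S (-(2 * (n : ℤ)) - 5 - 1) := by
      rintro (hh | ⟨m, _, hh⟩) <;> omega
    exact h (tf_of_not h1 h2)

lemma tf_injective {S S' : Set ℕ} (h : tf S = tf S') : S = S' := by
  ext n
  rw [mem_iff_tf_ne S n, mem_iff_tf_ne S' n, h]

/-- The involution of ℤ encoding `S`, as a permutation. -/
noncomputable def tperm (S : Set ℕ) : Equiv.Perm ℤ := (tf_invol S).toPerm _

lemma tperm_apply (S : Set ℕ) (x : ℤ) : tperm S x = tf S x := rfl

/-- The shift permutation of ℤ. -/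
def sig : Equiv.Perm ℤ := Equiv.addRight 1

lemma sig_zpow (n x : ℤ) : (sig ^ n) x = x + n := by
  induction n using Int.induction_on generalizing x with
  | zero => simp
  | succ k ih =>
      rw [zpow_add_one, Equiv.Perm.mul_apply, show sig x = x + 1 from rfl, ih]
      ring
  | pred k ih =>
      rw [sub_eq_add_neg, zpow_add, Equiv.Perm.mul_apply,
        show (sig ^ (-1 : ℤ)) = sig⁻¹ by simp,
        show sig⁻¹ x = x - 1 from rfl, ih]
      ring

/-- The generator images for the action of the surface group on ℤ. -/
noncomputable def fS (g : ℕ) (S : Set ℕ) : Fin g × Bool → Equiv.Perm ℤ :=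
  fun p =>
    match p with
    | (i, false) => if (i : ℕ) = 0 then sig else if (i : ℕ) = 1 then tperm S else 1
    | (_, true) => 1

lemma lift_rel (g : ℕ) (S : Set ℕ) :
    ∀ r ∈ ({surfaceRel g} : Set (FreeGroup (Fin g × Bool))),
      FreeGroup.lift (fS g S) r = 1 := by
  rintro r hr
  rw [Set.mem_singleton_iff] at hr
  subst hr
  unfold surfaceRel
  rw [map_list_prod, List.map_map]
  apply List.prod_eq_one
  intro x hx
  simp only [List.mem_map, Function.comp] at hx
  obtain ⟨i, _, rfl⟩ := hx
  simp [commutatorElement_def, fS]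

/-- The action homomorphism. -/
noncomputable def phi (g : ℕ) (S : Set ℕ) : SurfaceGroup g →* Equiv.Perm ℤ :=
  PresentedGroup.toGroup (lift_rel g S)

/-- The stabilizer of `0 : ℤ`. -/
noncomputable def MS (g : ℕ) (S : Set ℕ) : Subgroup (SurfaceGroup g) where
  carrier := {x | phi g S x 0 = 0}
  one_mem' := by simp
  mul_mem' := by
    intro a b ha hb
    simp only [Set.mem_setOf_eq, map_mul, Equiv.Perm.mul_apply] at *
    rw [hb, ha]
  inv_mem' := by
    intro a ha
    simp only [Set.mem_setOf_eq, map_inv] at *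
    rw [Equiv.Perm.inv_def, Equiv.symm_apply_eq]
    exact ha.symm

lemma mem_MS {g : ℕ} {S : Set ℕ} {x : SurfaceGroup g} :
    x ∈ MS g S ↔ phi g S x 0 = 0 := Iff.rfl

variable {g : ℕ}

/-- The generator `a₁`. -/
def Agen (hg : 2 ≤ g) : SurfaceGroup g := PresentedGroup.of (⟨0, by omega⟩, false)

/-- The generator `a₂`. -/
def Bgen (hg : 2 ≤ g) : SurfaceGroup g := PresentedGroup.of (⟨1, by omega⟩, false)

lemma phi_A (hg : 2 ≤ g) (S : Set ℕ) : phi g S (Agen hg) = sig := by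
  unfold phi Agen
  rw [PresentedGroup.toGroup.of]
  simp [fS]

lemma phi_B (hg : 2 ≤ g) (S : Set ℕ) : phi g S (Bgen hg) = tperm S := by
  unfold phi Bgen
  rw [PresentedGroup.toGroup.of]
  simp [fS]

lemma phi_A_zpow (hg : 2 ≤ g) (S : Set ℕ) (n x : ℤ) :
    phi g S ((Agen hg) ^ n) x = x + n := by
  rw [map_zpow, phi_A hg S, sig_zpow]

lemma key_lemma {S : Set ℕ} {N : Subgroup (SurfaceGroup g)} (hMN : MS g S ≤ N)
    (z x x' : SurfaceGroup g) (hx : x ∈ N) (hx' : x' ∈ N)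
    (h : phi g S z (phi g S x 0) = phi g S x' 0) : z ∈ N := by
  have hm : x'⁻¹ * (z * x) ∈ MS g S := by
    rw [mem_MS, map_mul, map_mul, map_inv, Equiv.Perm.mul_apply, Equiv.Perm.mul_apply, h,
      Equiv.Perm.inv_def, Equiv.symm_apply_eq]
  have hz : z = x' * (x'⁻¹ * (z * x)) * x⁻¹ := by group
  rw [hz]
  exact N.mul_mem (N.mul_mem hx' (hMN hm)) (N.inv_mem hx)

lemma coatom_MS (hg : 2 ≤ g) (S : Set ℕ) : IsCoatom (MS g S) := by
  constructor
  · intro htop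
    have hB : Bgen hg ∈ MS g S := htop ▸ Subgroup.mem_top _
    rw [mem_MS, phi_B hg S, tperm_apply, tf_zero] at hB
    exact one_ne_zero hB
  · intro N hN
    obtain ⟨x0, hx0N, hx0M⟩ := SetLike.exists_of_lt hN
    set b := phi g S x0 0 with hb
    have hbne : b ≠ 0 := fun h => hx0M (mem_MS.mpr h)
    have hAb : (Agen hg) ^ b ∈ N := by
      refine key_lemma hN.le _ 1 x0 (one_mem N) hx0N ?_
      rw [map_one, Equiv.Perm.one_apply, phi_A_zpow hg S, zero_add]
    have hAd : (Agen hg) ^ |b| ∈ N := by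
      rcases abs_choice b with h | h
      · rw [h]; exact hAb
      · rw [h, zpow_neg]; exact N.inv_mem hAb
    have hA : Agen hg ∈ N := by
      by_cases hd : |b| = 1
      · rw [← zpow_one (Agen hg), ← hd]; exact hAd
      · have hd2 : 2 ≤ |b| := by
          have := abs_pos.mpr hbne; omega
        have hBN : Bgen hg ∈ N := by
          refine key_lemma hN.le _ ((Agen hg) ^ |b|) ((Agen hg) ^ |b|) hAd hAd ?_
          rw [phi_A_zpow hg S, zero_add, phi_B hg S, tperm_apply, tf_of_two_le hd2]
        refine key_lemma hN.le _ 1 (Bgen hg) (one_mem N) hBN ?_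
        rw [map_one, Equiv.Perm.one_apply, phi_A hg S, phi_B hg S,
          show sig (0:ℤ) = 1 from rfl, tperm_apply, tf_zero]
    rw [eq_top_iff]
    intro y _
    refine key_lemma hN.le y 1 ((Agen hg) ^ (phi g S y 0)) (one_mem N) (N.zpow_mem hA _) ?_
    rw [map_one, Equiv.Perm.one_apply, phi_A_zpow hg S, zero_add]

lemma infinite_MS (hg : 2 ≤ g) (S : Set ℕ) : Infinite (SurfaceGroup g ⧸ MS g S) := by
  refine Infinite.of_injective (fun n : ℤ => ((Agen hg ^ n : SurfaceGroup g) : SurfaceGroup g ⧸ MS g S)) ?_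
  intro n m h
  rw [QuotientGroup.eq] at h
  rw [mem_MS, map_mul, Equiv.Perm.mul_apply, phi_A_zpow hg S, map_inv, Equiv.Perm.inv_def,
    Equiv.symm_apply_eq, phi_A_zpow hg S] at h
  omega

lemma distinguish (hg : 2 ≤ g) (S S' : Set ℕ) (γ : SurfaceGroup g)
    (h : MS g S' = Subgroup.map (MulAut.conj γ).toMonoidHom (MS g S)) : S = S' := by
  have hmem : ∀ x : SurfaceGroup g, phi g S' x 0 = 0 ↔ phi g S (γ⁻¹ * x * γ) 0 = 0 := by
    intro x
    rw [← mem_MS, ← mem_MS, h, Subgroup.mem_map_equiv, MulAut.conj_symm_apply]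
  set c := phi g S γ 0 with hc
  have key2 : ∀ (x : SurfaceGroup g) (n : ℤ), phi g S x (n + c) = phi g S' x n + c := by
    intro x n
    set m := phi g S' x n with hm
    set y := (Agen hg) ^ (-m) * (x * (Agen hg) ^ n) with hy
    have hy0 : phi g S' y 0 = 0 := by
      rw [hy, map_mul, map_mul, Equiv.Perm.mul_apply, Equiv.Perm.mul_apply]
      simp only [phi_A_zpow hg S']
      rw [zero_add, ← hm]
      ring
    have h1 : phi g S (γ⁻¹ * y * γ) 0 = 0 := (hmem y).mp hy0
    have h2 : phi g S (y * γ) 0 = c := by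
      have : y * γ = γ * (γ⁻¹ * y * γ) := by group
      rw [this, map_mul, Equiv.Perm.mul_apply, h1, hc]
    rw [hy] at h2
    rw [map_mul, map_mul, map_mul, Equiv.Perm.mul_apply, Equiv.Perm.mul_apply,
      Equiv.Perm.mul_apply] at h2
    simp only [phi_A_zpow hg S] at h2
    rw [← hc] at h2
    -- h2 : phi g S x (c + n) + -m = c
    have hfin : phi g S x (c + n) = m + c := by omega
    rw [show n + c = c + n by ring, hfin]
  have hid : ∀ n : ℤ, tf S (n + c) = tf S' n + c := by
    intro n
    have := key2 (Bgen hg) n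
    rwa [phi_B hg S, phi_B hg S', tperm_apply, tperm_apply] at this
  have hc0 : c = 0 := by
    have h1 : tf S (1 + c) ≠ 1 + c := by
      rw [hid 1, tf_one]
      omega
    have h2 : 1 + c ≤ 1 := le_one_of_tf_ne h1
    have h3 : tf S' (1 - c) ≠ 1 - c := by
      have h4 := hid (1 - c)
      rw [show 1 - c + c = 1 by ring, tf_one] at h4
      omega
    have h5 : 1 - c ≤ 1 := le_one_of_tf_ne h3
    omega
  refine tf_injective (funext fun n => ?_)
  have := hid n
  rw [hc0, add_zero, add_zero] at this
  exact this

lemma uncountable_setNat : Uncountable (Set ℕ) := by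
  rw [← not_countable_iff]
  intro hc
  obtain ⟨f, hf⟩ := (countable_iff_exists_injective (Set ℕ)).mp hc
  exact Function.cantor_injective f hf

lemma conjRel_equivalence {G : Type*} [Group G] (P : Subgroup G → Prop) :
    Equivalence (conjRel P) := by
  constructor
  · intro M
    refine ⟨1, ?_⟩
    ext x
    rw [Subgroup.mem_map_equiv, MulAut.conj_symm_apply]
    simp
  · rintro M N ⟨γ, hγ⟩
    refine ⟨γ⁻¹, ?_⟩
    ext x
    rw [Subgroup.mem_map_equiv, MulAut.conj_symm_apply, hγ, Subgroup.mem_map_equiv,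
      MulAut.conj_symm_apply]
    rw [show γ⁻¹ * (γ⁻¹⁻¹ * x * γ⁻¹) * γ = x by group]
  · rintro M N O ⟨γ1, h1⟩ ⟨γ2, h2⟩
    refine ⟨γ2 * γ1, ?_⟩
    ext x
    rw [h2, Subgroup.mem_map_equiv, MulAut.conj_symm_apply, h1, Subgroup.mem_map_equiv,
      MulAut.conj_symm_apply, Subgroup.mem_map_equiv, MulAut.conj_symm_apply]
    rw [show γ1⁻¹ * (γ2⁻¹ * x * γ2) * γ1 = (γ2 * γ1)⁻¹ * x * (γ2 * γ1) by group]

/-- For every integer g ≥ 2, the surface group of genus g has uncountably many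
conjugacy classes of maximal subgroups of infinite index. -/
theorem surfaceGroup_uncountably_many_maximal_infinite_index (g : ℕ) (hg : 2 ≤ g) :
    Uncountable (Quot (conjRel (fun M : Subgroup (SurfaceGroup g) =>
      IsCoatom M ∧ Infinite (SurfaceGroup g ⧸ M)))) := by
  set P : Subgroup (SurfaceGroup g) → Prop :=
    fun M => IsCoatom M ∧ Infinite (SurfaceGroup g ⧸ M) with hP
  have hPM : ∀ S : Set ℕ, P (MS g S) := fun S => ⟨coatom_MS hg S, infinite_MS hg S⟩
  have hinj : Function.Injective
      (fun S : Set ℕ => Quot.mk (conjRel P) (⟨MS g S, hPM S⟩ : {M // P M})) := by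
    intro S S' h
    have hE := Quot.eqvGen_exact h
    rw [(conjRel_equivalence P).eqvGen_iff] at hE
    obtain ⟨γ, hγ⟩ := hE
    exact distinguish hg S S' γ hγ
  have := uncountable_setNat
  exact hinj.uncountable
end

section
/- For every pair of integers p ≥ 3 and q ≥ 2, the group Γ = Δ(p,q,∞) ≅ C_p * C_q has uncountably many conjugacy classes of Neumann subgroups (and hence uncountably many conjugacy classes of maximal nonparabolic subgroups). -/
set_option linter.unusedSectionVars false
set_option maxHeartbeats 1000000


def triangleRels (p q : ℕ) : Set (FreeGroup (Fin 2)) :=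
  {FreeGroup.of 0 ^ p, FreeGroup.of 1 ^ q}

/-- The triangle group Δ(p,q,∞) = ⟨X, Y ∣ X^p = Y^q = 1⟩ ≅ C_p * C_q. -/
abbrev Tri (p q : ℕ) : Type := PresentedGroup (triangleRels p q)

def triX (p q : ℕ) : Tri p q := PresentedGroup.of 0
def triY (p q : ℕ) : Tri p q := PresentedGroup.of 1
def triZ (p q : ℕ) : Tri p q := (triX p q * triY p q)⁻¹

/-- An element is parabolic if it is conjugate to a nonzero power of Z. -/
def IsParabolic {p q : ℕ} (g : Tri p q) : Prop :=
  ∃ (k : ℤ) (c : Tri p q), k ≠ 0 ∧ g = c * (triZ p q) ^ k * c⁻¹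

/-- A subgroup is nonparabolic if it contains no parabolic element. -/
def Nonparabolic {p q : ℕ} (M : Subgroup (Tri p q)) : Prop :=
  ∀ g ∈ M, ¬ IsParabolic g

/-- A Neumann subgroup: a complement to P = ⟨Z⟩, i.e. M ∩ P = 1 and MP = Γ. -/
def IsNeumann {p q : ℕ} (M : Subgroup (Tri p q)) : Prop :=
  M ⊓ Subgroup.zpowers (triZ p q) = ⊥ ∧
  ∀ g : Tri p q, ∃ m ∈ M, ∃ k : ℤ, g = m * (triZ p q) ^ k

namespace NSub

variable (p q : ℕ) (α : ℕ → Bool)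

/-- zone length: standard zone has length L = p+q-3, variant zone 2L+1. -/
def zlen (b : Bool) : ℤ := if b then 2*((p:ℤ)+(q:ℤ)-3)+1 else (p:ℤ)+(q:ℤ)-3

/-- zone start positions -/
def zst : ℕ → ℤ
  | 0 => 0
  | k+1 => zst k + zlen p q (α k)

lemma zst_succ (k : ℕ) : zst p q α (k+1) = zst p q α k + zlen p q (α k) := rfl

lemma zlen_pos (hp : 3 ≤ p) (hq : 2 ≤ q) (b : Bool) : 0 < zlen p q b := by
  have h1 : (3:ℤ) ≤ (p:ℤ) := by exact_mod_cast hp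
  have h2 : (2:ℤ) ≤ (q:ℤ) := by exact_mod_cast hq
  unfold zlen; split <;> omega

lemma zst_ge (hp : 3 ≤ p) (hq : 2 ≤ q) : ∀ k : ℕ, (k:ℤ) ≤ zst p q α k := by
  intro k; induction k with
  | zero => simp [zst]
  | succ n ih =>
      have := zlen_pos p q hp hq (α n)
      rw [zst_succ]; push_cast; omega

lemma zst_nonneg (hp : 3 ≤ p) (hq : 2 ≤ q) (k : ℕ) : 0 ≤ zst p q α k := by
  have := zst_ge p q α hp hq k; omega

lemma zst_mono (hp : 3 ≤ p) (hq : 2 ≤ q) {k l : ℕ} (h : k ≤ l) :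
    zst p q α k ≤ zst p q α l := by
  induction l with
  | zero => simp_all
  | succ n ih =>
      rcases Nat.lt_or_ge k (n+1) with h' | h'
      · have h1 := ih (by omega)
        have h2 := zlen_pos p q hp hq (α n)
        rw [zst_succ]; omega
      · have : k = n+1 := by omega
        subst this; rfl

lemma zone_ex (hp : 3 ≤ p) (hq : 2 ≤ q) (n : ℤ) : ∃ k : ℕ, n < zst p q α (k+1) := by
  refine ⟨n.toNat, ?_⟩
  have := zst_ge p q α hp hq (n.toNat + 1)
  push_cast at this
  omega

/-- zone index of a (nonnegative) position -/
def zone (hp : 3 ≤ p) (hq : 2 ≤ q) (n : ℤ) : ℕ :=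
  Nat.find (zone_ex p q α hp hq n)

lemma zone_spec (hp : 3 ≤ p) (hq : 2 ≤ q) (n : ℤ) (hn : 0 ≤ n) :
    zst p q α (zone p q α hp hq n) ≤ n ∧ n < zst p q α (zone p q α hp hq n + 1) := by
  have hex := zone_ex p q α hp hq n
  refine ⟨?_, Nat.find_spec hex⟩
  rcases hk : zone p q α hp hq n with _ | m
  · simpa [zst] using hn
  · have hfind : Nat.find hex = m + 1 := hk
    have hmin := Nat.find_min hex (show m < Nat.find hex by omega)
    omega

lemma zone_eq (hp : 3 ≤ p) (hq : 2 ≤ q) {n : ℤ} {k : ℕ}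
    (h1 : zst p q α k ≤ n) (h2 : n < zst p q α (k+1)) : zone p q α hp hq n = k := by
  have hn : 0 ≤ n := le_trans (zst_nonneg p q α hp hq k) h1
  have hs := zone_spec p q α hp hq n hn
  by_contra hne
  rcases Nat.lt_or_ge (zone p q α hp hq n) k with h | h
  · have : zst p q α (zone p q α hp hq n + 1) ≤ zst p q α k := zst_mono p q α hp hq (by omega)
    omega
  · have : zst p q α (k+1) ≤ zst p q α (zone p q α hp hq n) := zst_mono p q α hp hq (by omega)
    omega

/-- the permutation on a zone, in absolute coordinates: `s` is the zone start,
`j` the offset, `k` the zone index, `b` the zone type. -/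
def xCell (b : Bool) (k : ℕ) (s j : ℤ) : ℤ :=
  if j ≤ (q:ℤ)-3 then s+j
  else if j = (q:ℤ)-2 then -(k:ℤ)-2
  else if b = false then s+j-1
  else if j = (q:ℤ)-1 then s+j+(p:ℤ)-1
  else if j ≤ (q:ℤ)+(p:ℤ)-2 then s+j-1
  else if j ≤ 2*(q:ℤ)+(p:ℤ)-4 then s+j
  else if j = 2*(q:ℤ)+(p:ℤ)-3 then s+(q:ℤ)-2
  else s+j-1

/-- the permutation of ℤ -/
def xF (hp : 3 ≤ p) (hq : 2 ≤ q) (n : ℤ) : ℤ :=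
  if n = -1 then -1
  else if n < 0 then zst p q α ((-n-2).toNat + 1) - 1
  else xCell p q (α (zone p q α hp hq n)) (zone p q α hp hq n) (zst p q α (zone p q α hp hq n))
        (n - zst p q α (zone p q α hp hq n))

variable (hp : 3 ≤ p) (hq : 2 ≤ q)

lemma xF_neg (k : ℕ) : xF p q α hp hq (-(k:ℤ)-2) = zst p q α (k+1) - 1 := by
  have h1 : (-(k:ℤ)-2) ≠ -1 := by omega
  have h2 : (-(k:ℤ)-2) < 0 := by omega
  have h3 : (-(-(k:ℤ)-2)-2).toNat = k := by omega
  simp [xF, h1, h2, h3]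

lemma xF_right (k : ℕ) (j : ℤ)
    (h0 : 0 ≤ j) (h1 : j < zlen p q (α k)) :
    xF p q α hp hq (zst p q α k + j) = xCell p q (α k) k (zst p q α k) j := by
  have hs := zst_nonneg p q α hp hq k
  have hz : zone p q α hp hq (zst p q α k + j) = k := by
    apply zone_eq p q α hp hq (by omega)
    rw [zst_succ]; omega
  have hne : zst p q α k + j ≠ -1 := by omega
  have hlt : ¬ (zst p q α k + j < 0) := by omega
  simp only [xF, if_neg hne, if_neg hlt, hz]
  ring_nf

end NSub

namespace NSub

lemma castP {p : ℕ} (hp : 3 ≤ p) : (3:ℤ) ≤ (p:ℤ) := by exact_mod_cast hp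
lemma castQ {q : ℕ} (hq : 2 ≤ q) : (2:ℤ) ≤ (q:ℤ) := by exact_mod_cast hq

/-! ### emod helpers -/

lemma emod_bounds {a m : ℤ} (hm : 0 < m) : 0 ≤ a % m ∧ a % m < m :=
  ⟨Int.emod_nonneg a (by omega), Int.emod_lt_of_pos a hm⟩

lemma emod_succ {a m : ℤ} (hm : 1 < m) :
    (a+1) % m = if a % m = m - 1 then 0 else a % m + 1 := by
  have h1 := emod_bounds (a := a) (by omega : (0:ℤ) < m)
  have h2 : (a+1) % m = (a % m + 1) % m := by
    rw [Int.add_emod, Int.emod_eq_of_lt (by omega) (by omega : (1:ℤ) < m)]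
  rw [h2]
  split
  · next h => rw [h]; simp
  · next h => exact Int.emod_eq_of_lt (by omega) (by omega)

variable (p q : ℕ) (α : ℕ → Bool) (hp : 3 ≤ p) (hq : 2 ≤ q)

/-! ### xCell evaluations -/

section CellEval
include hp hq

lemma xCell_fix0 (b : Bool) (k : ℕ) (s j : ℤ) (h : j ≤ (q:ℤ)-3) :
    xCell p q b k s j = s + j := by
  unfold xCell; rw [if_pos h]

lemma xCell_toleft (b : Bool) (k : ℕ) (s : ℤ) :
    xCell p q b k s ((q:ℤ)-2) = -(k:ℤ)-2 := by
  have hQ := castQ hq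
  unfold xCell; rw [if_neg (by omega), if_pos rfl]

lemma xCell_S_desc (k : ℕ) (s j : ℤ) (h : (q:ℤ)-1 ≤ j) :
    xCell p q false k s j = s+j-1 := by
  unfold xCell; rw [if_neg (by omega), if_neg (by omega), if_pos rfl]

lemma xCell_T_up (k : ℕ) (s : ℤ) :
    xCell p q true k s ((q:ℤ)-1) = s+(q:ℤ)+(p:ℤ)-2 := by
  unfold xCell
  rw [if_neg (by omega), if_neg (by omega), if_neg (by simp), if_pos rfl]
  ring

lemma xCell_T_desc1 (k : ℕ) (s j : ℤ) (h1 : (q:ℤ) ≤ j) (h2 : j ≤ (q:ℤ)+(p:ℤ)-2) :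
    xCell p q true k s j = s+j-1 := by
  have hQ := castQ hq
  unfold xCell
  rw [if_neg (by omega), if_neg (by omega), if_neg (by simp), if_neg (by omega), if_pos h2]

lemma xCell_T_fix (k : ℕ) (s j : ℤ) (h1 : (q:ℤ)+(p:ℤ)-1 ≤ j) (h2 : j ≤ 2*(q:ℤ)+(p:ℤ)-4) :
    xCell p q true k s j = s+j := by
  have hQ := castQ hq; have hP := castP hp
  unfold xCell
  rw [if_neg (by omega), if_neg (by omega), if_neg (by simp), if_neg (by omega),
    if_neg (by omega), if_pos h2]

lemma xCell_T_down (k : ℕ) (s : ℤ) :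
    xCell p q true k s (2*(q:ℤ)+(p:ℤ)-3) = s+(q:ℤ)-2 := by
  have hQ := castQ hq; have hP := castP hp
  unfold xCell
  rw [if_neg (by omega), if_neg (by omega), if_neg (by simp), if_neg (by omega),
    if_neg (by omega), if_neg (by omega), if_pos rfl]

lemma xCell_T_desc2 (k : ℕ) (s j : ℤ) (h1 : 2*(q:ℤ)+(p:ℤ)-2 ≤ j) :
    xCell p q true k s j = s+j-1 := by
  have hQ := castQ hq; have hP := castP hp
  unfold xCell
  rw [if_neg (by omega), if_neg (by omega), if_neg (by simp), if_neg (by omega),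
    if_neg (by omega), if_neg (by omega), if_neg (by omega)]

end CellEval

end NSub

namespace NSub

variable (p q : ℕ) (α : ℕ → Bool) (hp : 3 ≤ p) (hq : 2 ≤ q)

lemma zlen_false : zlen p q false = (p:ℤ)+(q:ℤ)-3 := by simp [zlen]
lemma zlen_true : zlen p q true = 2*((p:ℤ)+(q:ℤ)-3)+1 := by simp [zlen]

/-- the main x-cycle of a standard zone -/
def cycS (k : ℕ) (i : ℤ) : ℤ :=
  if i % (p:ℤ) = 0 then -(k:ℤ)-2
  else zst p q α k + ((p:ℤ)+(q:ℤ)-3 - i % (p:ℤ))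

/-- the main x-cycle of a variant zone -/
def cycT (k : ℕ) (i : ℤ) : ℤ :=
  if i % (p:ℤ) = 0 then -(k:ℤ)-2
  else if i % (p:ℤ) = (p:ℤ)-1 then zst p q α k + ((q:ℤ)-2)
  else zst p q α k + (2*((p:ℤ)+(q:ℤ)-3)+1 - i % (p:ℤ))

/-- the internal x-cycle of a variant zone -/
def cycD (k : ℕ) (i : ℤ) : ℤ :=
  if i % (p:ℤ) = 0 then zst p q α k + ((q:ℤ)-1)
  else zst p q α k + ((q:ℤ)+(p:ℤ)-1 - i % (p:ℤ))

/-- the chain w-cycle of any zone -/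
def cycE (k : ℕ) (i : ℤ) : ℤ :=
  if i % (q:ℤ) = (q:ℤ)-1 then -(k:ℤ)-1
  else zst p q α k + (i % (q:ℤ))

/-- the internal w-cycle of a variant zone -/
def cycG (k : ℕ) (i : ℤ) : ℤ :=
  if i % (q:ℤ) = 0 then zst p q α k + ((q:ℤ)-1)
  else zst p q α k + ((q:ℤ)+(p:ℤ)-2 + i % (q:ℤ))

/-- w, as a raw function -/
def wF (n : ℤ) : ℤ := xF p q α hp hq n + 1

lemma iter_cycle {f c : ℤ → ℤ} (hstep : ∀ i, f (c i) = c (i+1)) :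
    ∀ (m : ℕ) (i : ℤ), f^[m] (c i) = c (i + m) := by
  intro m
  induction m with
  | zero => intro i; simp
  | succ n ih =>
      intro i
      rw [Function.iterate_succ_apply, hstep i]
      rw [ih (i+1)]
      congr 1
      push_cast
      ring

section Steps
include hp hq

lemma hstepS {k : ℕ} (hk : α k = false) (i : ℤ) :
    xF p q α hp hq (cycS p q α k i) = cycS p q α k (i+1) := by
  have hP := castP hp; have hQ := castQ hq
  have hb := emod_bounds (a := i) (show (0:ℤ) < (p:ℤ) by omega)
  have hsucc := emod_succ (a := i) (m := (p:ℤ)) (by omega)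
  set r := i % (p:ℤ) with hr
  have hlen : zlen p q (α k) = (p:ℤ)+(q:ℤ)-3 := by rw [hk, zlen_false]
  rcases eq_or_ne r 0 with h0 | h0
  · have e1 : cycS p q α k i = -(k:ℤ)-2 := by unfold cycS; rw [← hr, if_pos h0]
    have e2 : cycS p q α k (i+1) = zst p q α k + ((p:ℤ)+(q:ℤ)-3 - 1) := by
      unfold cycS
      rw [hsucc, if_neg (show ¬ r = (p:ℤ)-1 by omega), if_neg (by omega)]
      omega
    rw [e1, e2, xF_neg, zst_succ, hlen]
    ring
  · rcases eq_or_ne r ((p:ℤ)-1) with h1 | h1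
    · have e1 : cycS p q α k i = zst p q α k + ((q:ℤ)-2) := by
        unfold cycS; rw [← hr, if_neg h0, h1]; ring_nf
      have e2 : cycS p q α k (i+1) = -(k:ℤ)-2 := by
        unfold cycS; rw [hsucc, if_pos h1, if_pos rfl]
      rw [e1, e2, xF_right p q α hp hq k _ (by omega) (by omega),
        xCell_toleft p q hp hq]
    · have e1 : cycS p q α k i = zst p q α k + ((p:ℤ)+(q:ℤ)-3 - r) := by
        unfold cycS; rw [← hr, if_neg h0]
      have e2 : cycS p q α k (i+1) = zst p q α k + ((p:ℤ)+(q:ℤ)-3 - (r+1)) := by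
        unfold cycS; rw [hsucc, if_neg h1, if_neg (by omega)]
      rw [e1, e2, xF_right p q α hp hq k _ (by omega) (by omega), hk,
        xCell_S_desc p q hp hq k _ _ (by omega)]
      ring
end Steps
end NSub

namespace NSub

variable (p q : ℕ) (α : ℕ → Bool) (hp : 3 ≤ p) (hq : 2 ≤ q)

lemma xF_min1 : xF p q α hp hq (-1) = -1 := by simp [xF]

section Steps2
include hp hq

lemma hstepT {k : ℕ} (hk : α k = true) (i : ℤ) :
    xF p q α hp hq (cycT p q α k i) = cycT p q α k (i+1) := by
  have hP := castP hp; have hQ := castQ hq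
  have hb := emod_bounds (a := i) (show (0:ℤ) < (p:ℤ) by omega)
  have hsucc := emod_succ (a := i) (m := (p:ℤ)) (by omega)
  set r := i % (p:ℤ) with hr
  have hlen : zlen p q (α k) = 2*((p:ℤ)+(q:ℤ)-3)+1 := by rw [hk, zlen_true]
  rcases eq_or_ne r 0 with h0 | h0
  · have e1 : cycT p q α k i = -(k:ℤ)-2 := by unfold cycT; rw [← hr, if_pos h0]
    have e2 : cycT p q α k (i+1) = zst p q α k + (2*((p:ℤ)+(q:ℤ)-3)+1 - 1) := by
      unfold cycT
      rw [hsucc, if_neg (show ¬ r = (p:ℤ)-1 by omega), if_neg (by omega),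
        if_neg (by omega)]
      omega
    rw [e1, e2, xF_neg, zst_succ, hlen]; ring
  · rcases eq_or_ne r ((p:ℤ)-1) with h1 | h1
    · have e1 : cycT p q α k i = zst p q α k + ((q:ℤ)-2) := by
        unfold cycT; rw [← hr, if_neg h0, if_pos h1]
      have e2 : cycT p q α k (i+1) = -(k:ℤ)-2 := by
        unfold cycT; rw [hsucc, if_pos h1, if_pos rfl]
      rw [e1, e2, xF_right p q α hp hq k _ (by omega) (by omega),
        xCell_toleft p q hp hq]
    · rcases eq_or_ne r ((p:ℤ)-2) with h2 | h2
      · have e1 : cycT p q α k i = zst p q α k + (2*(q:ℤ)+(p:ℤ)-3) := by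
          unfold cycT; rw [← hr, if_neg h0, if_neg h1]; omega
        have e2 : cycT p q α k (i+1) = zst p q α k + ((q:ℤ)-2) := by
          unfold cycT; rw [hsucc, if_neg h1, if_neg (by omega), if_pos (by omega)]
        rw [e1, e2, xF_right p q α hp hq k _ (by omega) (by omega), hk,
          xCell_T_down p q hp hq]
        ring
      · have e1 : cycT p q α k i = zst p q α k + (2*((p:ℤ)+(q:ℤ)-3)+1 - r) := by
          unfold cycT; rw [← hr, if_neg h0, if_neg h1]
        have e2 : cycT p q α k (i+1) = zst p q α k + (2*((p:ℤ)+(q:ℤ)-3)+1 - (r+1)) := by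
          unfold cycT; rw [hsucc, if_neg h1, if_neg (by omega), if_neg (by omega)]
        rw [e1, e2, xF_right p q α hp hq k _ (by omega) (by omega), hk,
          xCell_T_desc2 p q hp hq k _ _ (by omega)]
        ring

lemma hstepD {k : ℕ} (hk : α k = true) (i : ℤ) :
    xF p q α hp hq (cycD p q α k i) = cycD p q α k (i+1) := by
  have hP := castP hp; have hQ := castQ hq
  have hb := emod_bounds (a := i) (show (0:ℤ) < (p:ℤ) by omega)
  have hsucc := emod_succ (a := i) (m := (p:ℤ)) (by omega)
  set r := i % (p:ℤ) with hr
  have hlen : zlen p q (α k) = 2*((p:ℤ)+(q:ℤ)-3)+1 := by rw [hk, zlen_true]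
  rcases eq_or_ne r 0 with h0 | h0
  · have e1 : cycD p q α k i = zst p q α k + ((q:ℤ)-1) := by
      unfold cycD; rw [← hr, if_pos h0]
    have e2 : cycD p q α k (i+1) = zst p q α k + ((q:ℤ)+(p:ℤ)-1 - 1) := by
      unfold cycD; rw [hsucc, if_neg (show ¬ r = (p:ℤ)-1 by omega), if_neg (by omega)]
      omega
    rw [e1, e2, xF_right p q α hp hq k _ (by omega) (by omega), hk,
      xCell_T_up p q hp hq]
    ring
  · rcases eq_or_ne r ((p:ℤ)-1) with h1 | h1
    · have e1 : cycD p q α k i = zst p q α k + ((q:ℤ)) := by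
        unfold cycD; rw [← hr, if_neg h0]; omega
      have e2 : cycD p q α k (i+1) = zst p q α k + ((q:ℤ)-1) := by
        unfold cycD; rw [hsucc, if_pos h1, if_pos rfl]
      rw [e1, e2, xF_right p q α hp hq k _ (by omega) (by omega), hk,
        xCell_T_desc1 p q hp hq k _ _ (by omega) (by omega)]
      ring
    · have e1 : cycD p q α k i = zst p q α k + ((q:ℤ)+(p:ℤ)-1 - r) := by
        unfold cycD; rw [← hr, if_neg h0]
      have e2 : cycD p q α k (i+1) = zst p q α k + ((q:ℤ)+(p:ℤ)-1 - (r+1)) := by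
        unfold cycD; rw [hsucc, if_neg h1, if_neg (by omega)]
      rw [e1, e2, xF_right p q α hp hq k _ (by omega) (by omega), hk,
        xCell_T_desc1 p q hp hq k _ _ (by omega) (by omega)]
      ring

lemma hstepE (k : ℕ) (i : ℤ) :
    wF p q α hp hq (cycE p q α k i) = cycE p q α k (i+1) := by
  have hP := castP hp; have hQ := castQ hq
  have hb := emod_bounds (a := i) (show (0:ℤ) < (q:ℤ) by omega)
  have hsucc := emod_succ (a := i) (m := (q:ℤ)) (by omega)
  set r := i % (q:ℤ) with hr
  have hlen : (p:ℤ)+(q:ℤ)-3 ≤ zlen p q (α k) := by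
    rcases α k with _ | _ <;> simp [zlen] <;> omega
  rcases eq_or_ne r ((q:ℤ)-1) with h1 | h1
  · have e1 : cycE p q α k i = -(k:ℤ)-1 := by unfold cycE; rw [← hr, if_pos h1]
    have e2 : cycE p q α k (i+1) = zst p q α k + 0 := by
      unfold cycE; rw [hsucc, if_pos h1, if_neg (by omega)]
    rcases k with _ | k'
    · rw [e1, e2]
      show xF p q α hp hq (-1) + 1 = _
      rw [xF_min1]
      show (0:ℤ) = zst p q α 0 + 0
      simp [zst]
    · rw [e1, e2]
      have hcast : (-((k'+1 : ℕ):ℤ) - 1) = (-(k':ℤ)-2) := by push_cast; ring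
      show xF p q α hp hq (-((k'+1 : ℕ):ℤ)-1) + 1 = zst p q α (k'+1) + 0
      rw [hcast, xF_neg]
      ring
  · rcases eq_or_ne r ((q:ℤ)-2) with h2 | h2
    · have e1 : cycE p q α k i = zst p q α k + ((q:ℤ)-2) := by
        unfold cycE; rw [← hr, if_neg h1, h2]
      have e2 : cycE p q α k (i+1) = -(k:ℤ)-1 := by
        unfold cycE; rw [hsucc, if_neg h1, if_pos (by omega)]
      rw [e1, e2]
      show xF p q α hp hq _ + 1 = _
      rw [xF_right p q α hp hq k _ (by omega) (by omega), xCell_toleft p q hp hq]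
      ring
    · have e1 : cycE p q α k i = zst p q α k + r := by
        unfold cycE; rw [← hr, if_neg h1]
      have e2 : cycE p q α k (i+1) = zst p q α k + (r+1) := by
        unfold cycE; rw [hsucc, if_neg h1, if_neg (by omega)]
      rw [e1, e2]
      show xF p q α hp hq _ + 1 = _
      rw [xF_right p q α hp hq k _ (by omega) (by omega),
        xCell_fix0 p q hp hq (α k) k _ _ (by omega)]
      ring

lemma hstepG {k : ℕ} (hk : α k = true) (i : ℤ) :
    wF p q α hp hq (cycG p q α k i) = cycG p q α k (i+1) := by
  have hP := castP hp; have hQ := castQ hq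
  have hb := emod_bounds (a := i) (show (0:ℤ) < (q:ℤ) by omega)
  have hsucc := emod_succ (a := i) (m := (q:ℤ)) (by omega)
  set r := i % (q:ℤ) with hr
  have hlen : zlen p q (α k) = 2*((p:ℤ)+(q:ℤ)-3)+1 := by rw [hk, zlen_true]
  rcases eq_or_ne r 0 with h0 | h0
  · have e1 : cycG p q α k i = zst p q α k + ((q:ℤ)-1) := by
      unfold cycG; rw [← hr, if_pos h0]
    have e2 : cycG p q α k (i+1) = zst p q α k + ((q:ℤ)+(p:ℤ)-2 + 1) := by
      unfold cycG; rw [hsucc, if_neg (by omega), if_neg (by omega)]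
      omega
    rw [e1, e2]
    show xF p q α hp hq _ + 1 = _
    rw [xF_right p q α hp hq k _ (by omega) (by omega), hk, xCell_T_up p q hp hq]
    ring
  · rcases eq_or_ne r ((q:ℤ)-1) with h1 | h1
    · have e1 : cycG p q α k i = zst p q α k + (2*(q:ℤ)+(p:ℤ)-3) := by
        unfold cycG; rw [← hr, if_neg h0]; omega
      have e2 : cycG p q α k (i+1) = zst p q α k + ((q:ℤ)-1) := by
        unfold cycG; rw [hsucc, if_pos h1, if_pos rfl]
      rw [e1, e2]
      show xF p q α hp hq _ + 1 = _
      rw [xF_right p q α hp hq k _ (by omega) (by omega), hk, xCell_T_down p q hp hq]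
      ring
    · have e1 : cycG p q α k i = zst p q α k + ((q:ℤ)+(p:ℤ)-2 + r) := by
        unfold cycG; rw [← hr, if_neg h0]
      have e2 : cycG p q α k (i+1) = zst p q α k + ((q:ℤ)+(p:ℤ)-2 + (r+1)) := by
        unfold cycG; rw [hsucc, if_neg h1, if_neg (by omega)]
      rw [e1, e2]
      show xF p q α hp hq _ + 1 = _
      rw [xF_right p q α hp hq k _ (by omega) (by omega), hk,
        xCell_T_fix p q hp hq k _ _ (by omega) (by omega)]
      ring

end Steps2
end NSub

namespace NSub

variable (p q : ℕ) (α : ℕ → Bool) (hp : 3 ≤ p) (hq : 2 ≤ q)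

lemma add_emod_self' (a m : ℤ) : (a + m) % m = a % m := by
  rw [Int.add_emod, Int.emod_self, add_zero, Int.emod_emod_of_dvd _ dvd_rfl]

lemma cycS_per (k : ℕ) (i : ℤ) : cycS p q α k (i + (p:ℤ)) = cycS p q α k i := by
  unfold cycS; rw [add_emod_self']
lemma cycT_per (k : ℕ) (i : ℤ) : cycT p q α k (i + (p:ℤ)) = cycT p q α k i := by
  unfold cycT; rw [add_emod_self']
lemma cycD_per (k : ℕ) (i : ℤ) : cycD p q α k (i + (p:ℤ)) = cycD p q α k i := by
  unfold cycD; rw [add_emod_self']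
lemma cycE_per (k : ℕ) (i : ℤ) : cycE p q α k (i + (q:ℤ)) = cycE p q α k i := by
  unfold cycE; rw [add_emod_self']
lemma cycG_per (k : ℕ) (i : ℤ) : cycG p q α k (i + (q:ℤ)) = cycG p q α k i := by
  unfold cycG; rw [add_emod_self']

section Iter
include hp hq

lemma iter_ret_p {c : ℤ → ℤ} (hper : ∀ i, c (i + (p:ℤ)) = c i)
    (hstep : ∀ i, xF p q α hp hq (c i) = c (i+1)) (i : ℤ) :
    (xF p q α hp hq)^[p] (c i) = c i := by
  rw [iter_cycle hstep p i, hper i]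

lemma iter_ret_q {c : ℤ → ℤ} (hper : ∀ i, c (i + (q:ℤ)) = c i)
    (hstep : ∀ i, wF p q α hp hq (c i) = c (i+1)) (i : ℤ) :
    (wF p q α hp hq)^[q] (c i) = c i := by
  rw [iter_cycle hstep q i, hper i]

theorem xF_iter (n : ℤ) : (xF p q α hp hq)^[p] n = n := by
  have hP := castP hp; have hQ := castQ hq
  rcases lt_or_ge n 0 with hn | hn
  · rcases eq_or_ne n (-1) with h1 | h1
    · rw [h1]; exact Function.iterate_fixed (xF_min1 p q α hp hq) p
    · set k := (-n-2).toNat with hk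
      have hnk : n = -(k:ℤ)-2 := by rw [hk]; omega
      rcases hα : α k with _ | _
      · have hc : n = cycS p q α k 0 := by
          unfold cycS; rw [Int.zero_emod, if_pos rfl, hnk]
        rw [hc]
        exact iter_ret_p p q α hp hq (cycS_per p q α k) (hstepS p q α hp hq hα) 0
      · have hc : n = cycT p q α k 0 := by
          unfold cycT; rw [Int.zero_emod, if_pos rfl, hnk]
        rw [hc]
        exact iter_ret_p p q α hp hq (cycT_per p q α k) (hstepT p q α hp hq hα) 0
  · have hsp := zone_spec p q α hp hq n hn
    rw [zst_succ] at hsp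
    set k := zone p q α hp hq n with hk
    set j := n - zst p q α k with hj
    have hn' : n = zst p q α k + j := by omega
    rcases le_or_gt j ((q:ℤ)-3) with hj1 | hj1
    · have : xF p q α hp hq n = n := by
        rw [hn', xF_right p q α hp hq k j (by omega) (by omega),
          xCell_fix0 p q hp hq (α k) k _ _ hj1]
      exact Function.iterate_fixed this p
    · rcases hα : α k with _ | _
      · rw [hα] at hsp; rw [zlen_false] at hsp
        have hc : n = cycS p q α k ((p:ℤ)+(q:ℤ)-3 - j) := by
          unfold cycS
          rw [Int.emod_eq_of_lt (by omega) (by omega), if_neg (by omega)]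
          omega
        rw [hc]
        exact iter_ret_p p q α hp hq (cycS_per p q α k) (hstepS p q α hp hq hα) _
      · rw [hα] at hsp; rw [zlen_true] at hsp
        rcases eq_or_ne j ((q:ℤ)-2) with hj2 | hj2
        · have hc : n = cycT p q α k ((p:ℤ)-1) := by
            unfold cycT
            rw [Int.emod_eq_of_lt (by omega) (by omega), if_neg (by omega), if_pos rfl]
            omega
          rw [hc]
          exact iter_ret_p p q α hp hq (cycT_per p q α k) (hstepT p q α hp hq hα) _
        · rcases le_or_gt j ((q:ℤ)+(p:ℤ)-2) with hj3 | hj3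
          · -- j ∈ [q-1, q+p-2] : internal cycle cycD, i = q+p-1-j ∈ [1,p] ... i % p
            rcases eq_or_ne j ((q:ℤ)-1) with hj4 | hj4
            · have hc : n = cycD p q α k 0 := by
                unfold cycD; rw [Int.zero_emod, if_pos rfl]; omega
              rw [hc]
              exact iter_ret_p p q α hp hq (cycD_per p q α k) (hstepD p q α hp hq hα) _
            · have hc : n = cycD p q α k ((q:ℤ)+(p:ℤ)-1 - j) := by
                unfold cycD
                rw [Int.emod_eq_of_lt (by omega) (by omega), if_neg (by omega)]
                omega
              rw [hc]
              exact iter_ret_p p q α hp hq (cycD_per p q α k) (hstepD p q α hp hq hα) _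
          · rcases le_or_gt j (2*(q:ℤ)+(p:ℤ)-4) with hj5 | hj5
            · -- x-fixed region of variant zone
              have : xF p q α hp hq n = n := by
                rw [hn', xF_right p q α hp hq k j (by omega) (by rw [hα, zlen_true]; omega), hα,
                  xCell_T_fix p q hp hq k _ _ (by omega) (by omega)]
              exact Function.iterate_fixed this p
            · -- j ∈ [2q+p-3, 2L] : main cycle cycT, i = 2L+1-j ∈ [1, p-2]
              have hc : n = cycT p q α k (2*((p:ℤ)+(q:ℤ)-3)+1 - j) := by
                unfold cycT
                rw [Int.emod_eq_of_lt (by omega) (by omega), if_neg (by omega),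
                  if_neg (by omega)]
                omega
              rw [hc]
              exact iter_ret_p p q α hp hq (cycT_per p q α k) (hstepT p q α hp hq hα) _

theorem wF_iter (n : ℤ) : (wF p q α hp hq)^[q] n = n := by
  have hP := castP hp; have hQ := castQ hq
  rcases lt_or_ge n 0 with hn | hn
  · set k := (-n-1).toNat with hk
    have hnk : n = -(k:ℤ)-1 := by rw [hk]; omega
    have hc : n = cycE p q α k ((q:ℤ)-1) := by
      unfold cycE
      rw [Int.emod_eq_of_lt (by omega) (by omega), if_pos rfl, hnk]
    rw [hc]
    exact iter_ret_q p q α hp hq (cycE_per p q α k) (hstepE p q α hp hq k) _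
  · have hsp := zone_spec p q α hp hq n hn
    rw [zst_succ] at hsp
    set k := zone p q α hp hq n with hk
    set j := n - zst p q α k with hj
    have hn' : n = zst p q α k + j := by omega
    rcases le_or_gt j ((q:ℤ)-2) with hj1 | hj1
    · have hc : n = cycE p q α k j := by
        unfold cycE
        rw [Int.emod_eq_of_lt (by omega) (by omega), if_neg (by omega)]
        omega
      rw [hc]
      exact iter_ret_q p q α hp hq (cycE_per p q α k) (hstepE p q α hp hq k) _
    · rcases hα : α k with _ | _
      · rw [hα] at hsp; rw [zlen_false] at hsp
        have : wF p q α hp hq n = n := by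
          unfold wF
          rw [hn', xF_right p q α hp hq k j (by omega) (by rw [hα, zlen_false]; omega), hα,
            xCell_S_desc p q hp hq k _ _ (by omega)]
          ring
        exact Function.iterate_fixed this q
      · rw [hα] at hsp; rw [zlen_true] at hsp
        rcases eq_or_ne j ((q:ℤ)-1) with hj2 | hj2
        · have hc : n = cycG p q α k 0 := by
            unfold cycG; rw [Int.zero_emod, if_pos rfl]; omega
          rw [hc]
          exact iter_ret_q p q α hp hq (cycG_per p q α k) (hstepG p q α hp hq hα) _
        · rcases le_or_gt j ((q:ℤ)+(p:ℤ)-2) with hj3 | hj3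
          · have : wF p q α hp hq n = n := by
              unfold wF
              rw [hn', xF_right p q α hp hq k j (by omega) (by rw [hα, zlen_true]; omega), hα,
                xCell_T_desc1 p q hp hq k _ _ (by omega) (by omega)]
              ring
            exact Function.iterate_fixed this q
          · rcases le_or_gt j (2*(q:ℤ)+(p:ℤ)-3) with hj5 | hj5
            · have hc : n = cycG p q α k (j - ((q:ℤ)+(p:ℤ)-2)) := by
                unfold cycG
                rw [Int.emod_eq_of_lt (by omega) (by omega), if_neg (by omega)]
                omega
              rw [hc]
              exact iter_ret_q p q α hp hq (cycG_per p q α k) (hstepG p q α hp hq hα) _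
            · have : wF p q α hp hq n = n := by
                unfold wF
                rw [hn', xF_right p q α hp hq k j (by omega) (by rw [hα, zlen_true]; omega), hα,
                  xCell_T_desc2 p q hp hq k _ _ (by omega)]
                ring
              exact Function.iterate_fixed this q

end Iter
end NSub

namespace NSub

variable (p q : ℕ) (α : ℕ → Bool) (hp : 3 ≤ p) (hq : 2 ≤ q)

/-- x as a permutation -/
def xE : Equiv.Perm ℤ where
  toFun := xF p q α hp hq
  invFun := (xF p q α hp hq)^[p-1]
  left_inv := by
    intro n
    have h : (p-1).succ = p := by omega
    have h2 := Function.iterate_succ_apply (xF p q α hp hq) (p-1) n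
    rw [← h2, h, xF_iter]
  right_inv := by
    intro n
    have h : (p-1).succ = p := by omega
    have h2 := Function.iterate_succ_apply' (xF p q α hp hq) (p-1) n
    rw [← h2, h, xF_iter]

/-- w = s∘x as a permutation -/
def wE : Equiv.Perm ℤ := (xE p q α hp hq).trans (Equiv.addRight (1:ℤ))

lemma wE_coe : ⇑(wE p q α hp hq) = wF p q α hp hq := by
  funext n; rfl

lemma xE_pow : (xE p q α hp hq) ^ p = 1 := by
  ext n
  rw [← Equiv.Perm.iterate_eq_pow]
  exact xF_iter p q α hp hq n

lemma wE_pow : (wE p q α hp hq) ^ q = 1 := by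
  ext n
  rw [← Equiv.Perm.iterate_eq_pow, wE_coe]
  exact wF_iter p q α hp hq n

/-- generators image -/
def fgen : Fin 2 → Equiv.Perm ℤ := ![xE p q α hp hq, (wE p q α hp hq)⁻¹]

lemma fgen_rels : ∀ r ∈ triangleRels p q, FreeGroup.lift (fgen p q α hp hq) r = 1 := by
  intro r hr
  rcases hr with h | h
  · subst h
    rw [map_pow, FreeGroup.lift_apply_of]
    show (fgen p q α hp hq 0) ^ p = 1
    rw [show fgen p q α hp hq 0 = xE p q α hp hq from rfl]
    exact xE_pow p q α hp hq
  · rw [Set.mem_singleton_iff] at h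
    subst h
    rw [map_pow, FreeGroup.lift_apply_of]
    show (fgen p q α hp hq 1) ^ q = 1
    rw [show fgen p q α hp hq 1 = (wE p q α hp hq)⁻¹ from rfl, inv_pow, wE_pow]
    simp

/-- the action homomorphism -/
def phi : Tri p q →* Equiv.Perm ℤ :=
  PresentedGroup.toGroup (fgen_rels p q α hp hq)

lemma phi_X : phi p q α hp hq (triX p q) = xE p q α hp hq :=
  PresentedGroup.toGroup.of _

lemma phi_Y : phi p q α hp hq (triY p q) = (wE p q α hp hq)⁻¹ :=
  PresentedGroup.toGroup.of _

lemma phi_Z : phi p q α hp hq (triZ p q) = Equiv.addRight (1:ℤ) := by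
  unfold triZ
  rw [map_inv, map_mul, phi_X, phi_Y]
  ext n
  simp only [Equiv.coe_addRight]
  rw [show ((xE p q α hp hq * (wE p q α hp hq)⁻¹)⁻¹) n
      = (wE p q α hp hq) ((xE p q α hp hq)⁻¹ n) from rfl]
  show xF p q α hp hq ((xE p q α hp hq)⁻¹ n) + 1 = n + 1
  congr 1
  exact (xE p q α hp hq).apply_symm_apply n

lemma addRight_inv_apply (n : ℤ) : ((Equiv.addRight (1:ℤ))⁻¹ : Equiv.Perm ℤ) n = n - 1 := by
  rw [Equiv.Perm.inv_def, Equiv.symm_apply_eq, Equiv.coe_addRight]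
  ring

lemma addRight_zpow (k : ℤ) : ∀ n : ℤ, ((Equiv.addRight (1:ℤ)) ^ k) n = n + k := by
  induction k using Int.induction_on with
  | zero => intro n; simp
  | succ m ih =>
      intro n
      rw [zpow_add_one, Equiv.Perm.mul_apply, ih, Equiv.coe_addRight]
      push_cast; ring
  | pred m ih =>
      intro n
      rw [zpow_sub_one, Equiv.Perm.mul_apply, addRight_inv_apply, ih]
      push_cast; ring

lemma phi_Zpow (k : ℤ) (n : ℤ) : phi p q α hp hq ((triZ p q) ^ k) n = n + k := by
  rw [map_zpow, phi_Z, addRight_zpow]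

end NSub

namespace NSub

variable (p q : ℕ) (α : ℕ → Bool) (hp : 3 ≤ p) (hq : 2 ≤ q)

/-- the stabilizer of 0 : Neumann subgroup -/
def Mgrp : Subgroup (Tri p q) where
  carrier := {g | phi p q α hp hq g 0 = 0}
  one_mem' := by simp
  mul_mem' := by
    intro a b ha hb
    show phi p q α hp hq (a*b) 0 = 0
    rw [map_mul, Equiv.Perm.mul_apply]
    rw [show phi p q α hp hq b 0 = 0 from hb]
    exact ha
  inv_mem' := by
    intro a ha
    show phi p q α hp hq a⁻¹ 0 = 0
    rw [map_inv, Equiv.Perm.inv_def, Equiv.symm_apply_eq]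
    exact (show phi p q α hp hq a 0 = 0 from ha).symm

lemma mem_Mgrp (g : Tri p q) : g ∈ Mgrp p q α hp hq ↔ phi p q α hp hq g 0 = 0 :=
  Iff.rfl

lemma Mgrp_neumann : IsNeumann (Mgrp p q α hp hq) := by
  constructor
  · rw [eq_bot_iff]
    intro g hg
    obtain ⟨hM, hZ⟩ := hg
    obtain ⟨k, rfl⟩ := Subgroup.mem_zpowers_iff.mp hZ
    have h0 : phi p q α hp hq (triZ p q ^ k) 0 = 0 := hM
    rw [phi_Zpow] at h0
    have : k = 0 := by omega
    subst this
    simp [Subgroup.mem_bot]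
  · intro g
    set t := phi p q α hp hq g⁻¹ 0 with ht
    refine ⟨g * (triZ p q) ^ t, ?_, -t, ?_⟩
    · rw [mem_Mgrp, map_mul, Equiv.Perm.mul_apply, phi_Zpow, zero_add, ht,
        map_inv, Equiv.Perm.inv_def]
      exact (phi p q α hp hq g).apply_symm_apply 0
    · rw [mul_assoc, ← zpow_add]
      simp

lemma Mgrp_nonparabolic : Nonparabolic (Mgrp p q α hp hq) := by
  intro g hg hpar
  obtain ⟨k, c, hk0, rfl⟩ := hpar
  rw [mem_Mgrp, map_mul, map_mul, map_inv, Equiv.Perm.mul_apply, Equiv.Perm.mul_apply,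
    phi_Zpow] at hg
  have h2 : phi p q α hp hq c ((phi p q α hp hq c)⁻¹ 0) = 0 :=
    (phi p q α hp hq c).apply_symm_apply 0
  have h3 := (phi p q α hp hq c).injective (hg.trans h2.symm)
  rw [Equiv.Perm.inv_def] at h3
  omega

lemma Mgrp_maximal : ∀ N : Subgroup (Tri p q), Mgrp p q α hp hq < N →
    ∃ g ∈ N, IsParabolic g := by
  intro N hlt
  obtain ⟨n, hnN, hnM⟩ := SetLike.exists_of_lt hlt
  set t := phi p q α hp hq n⁻¹ 0 with ht
  have hmM : n * (triZ p q) ^ t ∈ Mgrp p q α hp hq := by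
    rw [mem_Mgrp, map_mul, Equiv.Perm.mul_apply, phi_Zpow, zero_add, ht,
      map_inv, Equiv.Perm.inv_def]
    exact (phi p q α hp hq n).apply_symm_apply 0
  have ht0 : t ≠ 0 := by
    intro h0
    rw [h0] at hmM
    simp at hmM
    exact hnM hmM
  refine ⟨(triZ p q) ^ t, ?_, t, 1, ht0, by simp⟩
  have : (triZ p q) ^ t = n⁻¹ * (n * (triZ p q) ^ t) := by group
  rw [this]
  exact N.mul_mem (N.inv_mem hnN) (hlt.le hmM)

end NSub

namespace NSub

variable (p q : ℕ) (α β : ℕ → Bool) (hp : 3 ≤ p) (hq : 2 ≤ q)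

section Rigid
include hp hq

lemma conj_xF (g : Tri p q)
    (hconj : Mgrp p q β hp hq =
      Subgroup.map (MulAut.conj g).toMonoidHom (Mgrp p q α hp hq)) :
    ∀ n : ℤ, xF p q β hp hq n
      = xF p q α hp hq (n + phi p q α hp hq g 0) - phi p q α hp hq g 0 := by
  set c := phi p q α hp hq g 0 with hc
  have hmem : ∀ h : Tri p q, phi p q β hp hq h 0 = 0 ↔ phi p q α hp hq h c = c := by
    intro h
    have h1 : h ∈ Mgrp p q β hp hq ↔ g⁻¹ * h * g ∈ Mgrp p q α hp hq := by
      rw [hconj, Subgroup.mem_map_equiv, MulAut.conj_symm_apply]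
    rw [mem_Mgrp, mem_Mgrp] at h1
    rw [h1, map_mul, map_mul, map_inv, Equiv.Perm.mul_apply, Equiv.Perm.mul_apply,
      Equiv.Perm.inv_def, Equiv.symm_apply_eq, hc]
  have key : ∀ (h : Tri p q) (n : ℤ),
      phi p q β hp hq h n = phi p q α hp hq h (n + c) - c := by
    intro h n
    set m := phi p q β hp hq h n with hm
    have hh : phi p q β hp hq ((triZ p q)^(-m) * h * (triZ p q)^n) 0 = 0 := by
      rw [map_mul, map_mul, Equiv.Perm.mul_apply, Equiv.Perm.mul_apply,
        phi_Zpow, phi_Zpow, zero_add]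
      omega
    have h2 := (hmem _).mp hh
    rw [map_mul, map_mul, Equiv.Perm.mul_apply, Equiv.Perm.mul_apply,
      phi_Zpow, phi_Zpow] at h2
    have : phi p q α hp hq h (c + n) = c + m := by omega
    rw [show n + c = c + n by ring, this]
    ring
  intro n
  have := key (triX p q) n
  rw [phi_X, phi_X] at this
  exact this

lemma conj_c_zero (g : Tri p q)
    (hconj : Mgrp p q β hp hq =
      Subgroup.map (MulAut.conj g).toMonoidHom (Mgrp p q α hp hq)) :
    phi p q α hp hq g 0 = 0 := by
  have hx := conj_xF p q α β hp hq g hconj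
  set c := phi p q α hp hq g 0 with hc
  have hneg : ∀ (γ : ℕ → Bool) (n : ℤ), n ≤ -2 → xF p q γ hp hq n ≠ n := by
    intro γ n hn
    have hk : n = -(((-n-2).toNat : ℕ):ℤ)-2 := by omega
    rw [hk, xF_neg]
    have h1 := zst_ge p q γ hp hq ((-n-2).toNat + 1)
    push_cast at h1 ⊢
    omega
  have h1 : xF p q α hp hq (-1 + c) = -1 + c := by
    have := hx (-1)
    rw [xF_min1] at this
    omega
  have h2 : xF p q β hp hq (-1 - c) = -1 - c := by
    have := hx (-1 - c)
    rw [show (-1 - c) + c = -1 by ring, xF_min1] at this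
    omega
  have hc1 : -1 + c ≥ -1 := by
    by_contra hlt
    exact hneg α (-1 + c) (by omega) h1
  have hc2 : -1 - c ≥ -1 := by
    by_contra hlt
    exact hneg β (-1 - c) (by omega) h2
  omega

lemma read_bit (γ : ℕ → Bool) (k : ℕ) :
    xF p q γ hp hq (zst p q γ k + ((q:ℤ)-1))
      = if γ k then zst p q γ k + ((q:ℤ)+(p:ℤ)-2) else zst p q γ k + ((q:ℤ)-2) := by
  have hP := castP hp; have hQ := castQ hq
  have hb : ((q:ℤ)-1) < zlen p q (γ k) := by
    rcases γ k with _|_ <;> simp [zlen] <;> omega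
  rw [xF_right p q γ hp hq k _ (by omega) hb]
  rcases hb2 : γ k with _|_
  · rw [xCell_S_desc p q hp hq k _ _ (by omega)]
    simp; ring
  · rw [xCell_T_up p q hp hq]
    simp; ring

lemma bits_eq (hxx : ∀ n, xF p q β hp hq n = xF p q α hp hq n) : α = β := by
  have hP := castP hp; have hQ := castQ hq
  have main : ∀ k, zst p q α k = zst p q β k ∧ α k = β k := by
    intro k
    induction k with
    | zero =>
        constructor
        · rfl
        · have h1 := read_bit p q hp hq α 0
          have h2 := read_bit p q hp hq β 0
          have hz : zst p q α 0 = zst p q β 0 := rfl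
          rw [← hxx, hz] at h1
          rw [h2] at h1
          rcases hb1 : α 0 with _|_ <;> rcases hb2 : β 0 with _|_ <;>
            rw [hb1, hb2] at h1 <;> simp_all <;> omega
    | succ k ih =>
        have hz : zst p q α (k+1) = zst p q β (k+1) := by
          rw [zst_succ, zst_succ, ih.1, ih.2]
        refine ⟨hz, ?_⟩
        have h1 := read_bit p q hp hq α (k+1)
        have h2 := read_bit p q hp hq β (k+1)
        rw [← hxx, hz] at h1
        rw [h2] at h1
        rcases hb1 : α (k+1) with _|_ <;> rcases hb2 : β (k+1) with _|_ <;>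
          rw [hb1, hb2] at h1 <;> simp_all <;> omega
  funext k
  exact (main k).2

lemma conj_rigid (g : Tri p q)
    (hconj : Mgrp p q β hp hq =
      Subgroup.map (MulAut.conj g).toMonoidHom (Mgrp p q α hp hq)) :
    α = β := by
  have hc := conj_c_zero p q α β hp hq g hconj
  have hx := conj_xF p q α β hp hq g hconj
  rw [hc] at hx
  simp only [add_zero, sub_zero] at hx
  exact bits_eq p q α β hp hq hx

end Rigid
end NSub

namespace NSub

lemma conjRel_equiv {G : Type*} [Group G] (P : Subgroup G → Prop) :
    Equivalence (conjRel P) := by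
  constructor
  · intro M
    refine ⟨1, ?_⟩
    ext x
    simp [Subgroup.mem_map_equiv, MulAut.conj_symm_apply]
  · rintro M N ⟨g, hg⟩
    refine ⟨g⁻¹, ?_⟩
    ext x
    rw [hg]
    simp only [Subgroup.mem_map_equiv, MulAut.conj_symm_apply]
    group
  · rintro M N O ⟨g, hg⟩ ⟨g', hg'⟩
    refine ⟨g' * g, ?_⟩
    ext x
    rw [hg', hg]
    simp only [Subgroup.mem_map_equiv, MulAut.conj_symm_apply]
    group

instance uncountable_nat_bool : Uncountable (ℕ → Bool) := by
  rw [uncountable_iff_isEmpty_embedding]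
  constructor
  intro f
  have hginj : Function.Injective
      (fun S : Set ℕ => f (fun n => @decide (n ∈ S) (Classical.propDecidable _))) := by
    intro S T h
    have h2 := f.injective h
    ext n
    have h3 := congrFun h2 n
    have := @of_decide_eq_true (n ∈ S) (Classical.propDecidable _)
    have := @of_decide_eq_true (n ∈ T) (Classical.propDecidable _)
    constructor
    · intro hn
      have hS : @decide (n ∈ S) (Classical.propDecidable _) = true :=
        @decide_eq_true (n ∈ S) (Classical.propDecidable _) hn
      exact @of_decide_eq_true (n ∈ T) (Classical.propDecidable _) (by rw [← h3, hS])
    · intro hn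
      have hT : @decide (n ∈ T) (Classical.propDecidable _) = true :=
        @decide_eq_true (n ∈ T) (Classical.propDecidable _) hn
      exact @of_decide_eq_true (n ∈ S) (Classical.propDecidable _) (by rw [h3, hT])
  exact Function.cantor_injective _ hginj

variable (p q : ℕ) (hp : 3 ≤ p) (hq : 2 ≤ q)

lemma main_unc {P : Subgroup (Tri p q) → Prop}
    (hP : ∀ γ : ℕ → Bool, P (Mgrp p q γ hp hq)) :
    Uncountable (Quot (conjRel P)) := by
  have hinj : Function.Injective
      (fun γ : ℕ → Bool => Quot.mk (conjRel P) ⟨Mgrp p q γ hp hq, hP γ⟩) := by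
    intro γ δ h
    have h2 := Quot.eq.mp h
    rw [Equivalence.eqvGen_eq (conjRel_equiv P)] at h2
    obtain ⟨g, hg⟩ := h2
    exact conj_rigid p q γ δ hp hq g hg
  exact hinj.uncountable

end NSub



/-- For all integers p ≥ 3, q ≥ 2, the group Δ(p,q,∞) has uncountably many conjugacy
classes of Neumann subgroups, and hence uncountably many conjugacy classes of maximal
nonparabolic subgroups. -/
theorem uncountably_many_neumann_subgroups (p q : ℕ) (hp : 3 ≤ p) (hq : 2 ≤ q) :
    Uncountable (Quot (conjRel (fun M : Subgroup (Tri p q) => IsNeumann M))) ∧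
    Uncountable (Quot (conjRel (fun M : Subgroup (Tri p q) =>
      Nonparabolic M ∧ ∀ N : Subgroup (Tri p q), M < N → ∃ g ∈ N, IsParabolic g))) := by
  constructor
  · exact NSub.main_unc p q hp hq (fun γ => NSub.Mgrp_neumann p q γ hp hq)
  · exact NSub.main_unc p q hp hq
      (fun γ => ⟨NSub.Mgrp_nonparabolic p q γ hp hq, NSub.Mgrp_maximal p q γ hp hq⟩)
end
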